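/- (Simulation lemma, finite case.) Let two finite-horizon MDPs share finite state and action spaces and horizon H but have transitions P', P'' and rewards r', r''. For any policy π and any step h and state s_h: V^π_{h,P',r'}(s_h) − V^π_{h,P'',r''}(s_h) = ∑_{h'=h}^{H} E_{(s_{h'},a_{h'}) ∼ (P'',π) | s_h}[ r'(s_{h'},a_{h'}) − r''(s_{h'},a_{h'}) + (P'_{h'} − P''_{h'}) V^π_{h'+1,P',r'}(s_{h'},a_{h'}) ]. -/

import Mathlib

def IsProbKernel {S A : Type*} [Fintype S] (P : ℕ → S → A → S → ℝ) : Prop :=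
  ∀ h s a, (∀ s', 0 ≤ P h s a s') ∧ ∑ s', P h s a s' = 1

def IsPolicy {S A : Type*} [Fintype A] (pol : ℕ → S → A → ℝ) : Prop :=
  ∀ h s, (∀ a, 0 ≤ pol h s a) ∧ ∑ a, pol h s a = 1

def IsVal {S A : Type*} [Fintype S] [Fintype A] (H : ℕ)
    (P : ℕ → S → A → S → ℝ) (pol : ℕ → S → A → ℝ) (r : ℕ → S → A → ℝ)
    (Q : ℕ → S → A → ℝ) (V : ℕ → S → ℝ) : Prop :=
  (∀ s a, Q (H + 1) s a = 0) ∧ (∀ s, V (H + 1) s = 0) ∧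
  (∀ h, 1 ≤ h → h ≤ H → ∀ s a,
      Q h s a = r h s a + ∑ s', P h s a s' * V (h + 1) s') ∧
  (∀ h, 1 ≤ h → h ≤ H → ∀ s, V h s = ∑ a, pol h s a * Q h s a)

/-- `expect P pol h k f s = E[f(s_{h+k}) | s_h = s]` where the trajectory follows
transition `P` and policy `pol`. -/
def expect {S A : Type*} [Fintype S] [Fintype A]
    (P : ℕ → S → A → S → ℝ) (pol : ℕ → S → A → ℝ) (h : ℕ) :
    ℕ → (S → ℝ) → S → ℝ
  | 0, f => f
  | k + 1, f => fun s => ∑ a, pol h s a * ∑ s', P h s a s' * expect P pol (h + 1) k f s'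

/-- Simulation lemma (finite case). -/
theorem simulation_lemma {S A : Type*} [Fintype S] [Fintype A] (H : ℕ)
    (P' P'' : ℕ → S → A → S → ℝ) (pol : ℕ → S → A → ℝ)
    (r' r'' : ℕ → S → A → ℝ)
    (hP' : IsProbKernel P') (hP'' : IsProbKernel P'') (hpol : IsPolicy pol)
    (Q' Q'' : ℕ → S → A → ℝ) (V' V'' : ℕ → S → ℝ)
    (hV' : IsVal H P' pol r' Q' V') (hV'' : IsVal H P'' pol r'' Q'' V'') :
    ∀ h, 1 ≤ h → h ≤ H + 1 → ∀ s,
      V' h s - V'' h s =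
        ∑ h' ∈ Finset.Icc h H,
          expect P'' pol h (h' - h)
            (fun t => ∑ a, pol h' t a *
              (r' h' t a - r'' h' t a
                + ∑ s', (P' h' t a s' - P'' h' t a s') * V' (h' + 1) s')) s := by
  obtain ⟨hQ'0, hV'0, hQ'r, hV'r⟩ := hV'
  obtain ⟨hQ''0, hV''0, hQ''r, hV''r⟩ := hV''
  set g : ℕ → S → ℝ := fun h' t => ∑ a, pol h' t a *
      (r' h' t a - r'' h' t a + ∑ s', (P' h' t a s' - P'' h' t a s') * V' (h' + 1) s')
      with hg
  suffices key : ∀ k h, h + k = H + 1 → 1 ≤ h → ∀ s,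
      V' h s - V'' h s = ∑ h' ∈ Finset.Icc h H, expect P'' pol h (h' - h) (g h') s by
    intro h h1 h2 s
    exact key (H + 1 - h) h (by omega) h1 s
  intro k
  induction k with
  | zero =>
    intro h hk h1 s
    have hh : h = H + 1 := by omega
    subst hh
    rw [Finset.Icc_eq_empty (by omega), Finset.sum_empty, hV'0, hV''0, sub_self]
  | succ k ih =>
    intro h hk h1 s
    have hhH : h ≤ H := by omega
    have hIcc : Finset.Icc h H = insert h (Finset.Icc (h + 1) H) := by
      ext x; simp only [Finset.mem_Icc, Finset.mem_insert]; omega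
    rw [hIcc, Finset.sum_insert (by simp [Finset.mem_Icc]), Nat.sub_self]
    have ihv : ∀ s', V' (h+1) s' - V'' (h+1) s' =
        ∑ h' ∈ Finset.Icc (h+1) H, expect P'' pol (h+1) (h' - (h+1)) (g h') s' :=
      ih (h+1) (by omega) (by omega)
    have tail : ∀ h' ∈ Finset.Icc (h+1) H,
        expect P'' pol h (h' - h) (g h') s
          = ∑ a, pol h s a * ∑ s', P'' h s a s' *
              expect P'' pol (h+1) (h' - (h+1)) (g h') s' := by
      intro h' hh'
      simp only [Finset.mem_Icc] at hh'
      have e : h' - h = (h' - (h+1)) + 1 := by omega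
      rw [e]; rfl
    rw [Finset.sum_congr rfl tail]
    have stepA : V' h s - V'' h s =
        g h s + ∑ a, pol h s a *
          ∑ s', P'' h s a s' * (V' (h+1) s' - V'' (h+1) s') := by
      rw [hV'r h h1 hhH, hV''r h h1 hhH, hg]
      simp only
      rw [← Finset.sum_sub_distrib, ← Finset.sum_add_distrib]
      refine Finset.sum_congr rfl fun a _ => ?_
      rw [hQ'r h h1 hhH, hQ''r h h1 hhH]
      simp only [sub_mul, mul_sub, Finset.sum_sub_distrib]
      ring
    rw [stepA]
    show _ = expect P'' pol h 0 (g h) s + _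
    rw [show expect P'' pol h 0 (g h) s = g h s from rfl]
    congr 1
    simp only [ihv, Finset.mul_sum]
    have swap1 : ∀ (F : A → S → ℕ → ℝ),
        ∑ a, ∑ s', ∑ h' ∈ Finset.Icc (h+1) H, F a s' h'
          = ∑ h' ∈ Finset.Icc (h+1) H, ∑ a, ∑ s', F a s' h' := by
      intro F
      calc ∑ a, ∑ s', ∑ h' ∈ Finset.Icc (h+1) H, F a s' h'
          = ∑ a, ∑ h' ∈ Finset.Icc (h+1) H, ∑ s', F a s' h' :=
            Finset.sum_congr rfl fun a _ => Finset.sum_comm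
        _ = _ := Finset.sum_comm
    exact swap1 fun a s' h' =>
      pol h s a * (P'' h s a s' * expect P'' pol (h+1) (h' - (h+1)) (g h') s')
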